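/- If A(a) and B(b) are local observables with ⟨A(a)⟩_ψ = ⟨B(b)⟩_ψ = 0 on a maximally entangled state ψ, then the Pearson correlation coefficient r(A,B) = ⟨A(a)B(b)⟩_ψ / √(⟨A(a)²⟩_ψ ⟨B(b)²⟩_ψ) equals (a/‖a‖) · (b/‖b‖). In particular r = 1 when b = a and r = −1 when b = −a. -/

import Mathlib

open Matrix Kronecker

/-- The maximally entangled state `(1/√N) ∑ⱼ |j⟩ ⊗ |j⟩`, in Schmidt-basis coordinates. -/
noncomputable def maxEnt (N : ℕ) : Fin N × Fin N → ℂ :=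
  fun p => if p.1 = p.2 then ((Real.sqrt N : ℂ))⁻¹ else 0

/-- Quantum expectation `⟨ψ| M |ψ⟩` on the maximally entangled state. -/
noncomputable def qExp (N : ℕ) (M : Matrix (Fin N × Fin N) (Fin N × Fin N) ℂ) : ℂ :=
  star (maxEnt N) ⬝ᵥ (M *ᵥ maxEnt N)

/-- The trace-orthonormal Hermitian basis `{F_k}` built from the Schmidt basis of `H_A`. -/
noncomputable def hermBasis (N : ℕ) (k : Fin N × Fin N) : Matrix (Fin N) (Fin N) ℂ :=
  if k.1 = k.2 then Matrix.single k.1 k.1 1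
  else if k.1 < k.2 then
    ((Real.sqrt 2 : ℂ))⁻¹ • (Matrix.single k.1 k.2 1 + Matrix.single k.2 k.1 1)
  else
    (Complex.I * ((Real.sqrt 2 : ℂ))⁻¹) •
      (Matrix.single k.2 k.1 1 - Matrix.single k.1 k.2 1)

/-- Alice's observable `A(a) = ∑ₖ aₖ Fₖ`. -/
noncomputable def Aop (N : ℕ) (a : Fin N × Fin N → ℝ) : Matrix (Fin N) (Fin N) ℂ :=
  ∑ k, (a k : ℂ) • hermBasis N k

/-- Bob's observable `B(b) = ∑ₖ bₖ Gₖ` with `Gₖ = Fₖᵀ` in the Schmidt bases. -/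
noncomputable def Bop (N : ℕ) (b : Fin N × Fin N → ℝ) : Matrix (Fin N) (Fin N) ℂ :=
  ∑ k, (b k : ℂ) • (hermBasis N k)ᵀ

/-- The Pearson correlation coefficient
`r(A,B) = ⟨A(a)B(b)⟩_ψ / √(⟨A(a)²⟩_ψ ⟨B(b)²⟩_ψ)` of two local observables
(these averages being real). -/
noncomputable def pearson (N : ℕ) (a b : Fin N × Fin N → ℝ) : ℂ :=
  qExp N (Aop N a ⊗ₖ Bop N b) /
    ((Real.sqrt ((qExp N ((Aop N a * Aop N a) ⊗ₖ 1)).re *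
      (qExp N ((1 : Matrix (Fin N) (Fin N) ℂ) ⊗ₖ (Bop N b * Bop N b))).re) : ℝ) : ℂ)

/- ### Auxiliary lemmas -/

lemma traceEE (N : ℕ) (p q r s : Fin N) :
    Matrix.trace (Matrix.single p q (1:ℂ) * Matrix.single r s 1) =
    if q = r ∧ s = p then 1 else 0 := by
  by_cases h : q = r
  · subst h
    rw [Matrix.single_mul_single_same]
    by_cases h2 : s = p
    · subst h2; simp [Matrix.trace_single_eq_same]
    · rw [Matrix.trace_single_eq_of_ne _ _ _ (Ne.symm h2)]; simp [h2]
  · rw [Matrix.single_mul_single_of_ne (h := h)]; simp [h]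

lemma sqrt2_inv_mul : ((Real.sqrt 2 : ℂ))⁻¹ * ((Real.sqrt 2 : ℂ))⁻¹ = 2⁻¹ := by
  rw [← mul_inv, ← Complex.ofReal_mul, Real.mul_self_sqrt (by norm_num)]
  norm_num

lemma hermBasis_diag (N : ℕ) {k : Fin N × Fin N} (h : k.1 = k.2) :
    hermBasis N k = Matrix.single k.1 k.1 1 := by rw [hermBasis, if_pos h]

lemma hermBasis_lt (N : ℕ) {k : Fin N × Fin N} (h : k.1 < k.2) :
    hermBasis N k = ((Real.sqrt 2 : ℂ))⁻¹ •
      (Matrix.single k.1 k.2 1 + Matrix.single k.2 k.1 1) := by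
  rw [hermBasis, if_neg h.ne, if_pos h]

lemma hermBasis_gt (N : ℕ) {k : Fin N × Fin N} (h : k.2 < k.1) :
    hermBasis N k = (Complex.I * ((Real.sqrt 2 : ℂ))⁻¹) •
      (Matrix.single k.2 k.1 1 - Matrix.single k.1 k.2 1) := by
  rw [hermBasis, if_neg h.ne', if_neg (not_lt.mpr h.le)]

lemma trace_smul_mul_smul (N : ℕ) (c d : ℂ) (M P : Matrix (Fin N) (Fin N) ℂ) :
    Matrix.trace ((c • M) * (d • P)) = c * d * Matrix.trace (M * P) := by
  rw [Matrix.smul_mul, Matrix.mul_smul, Matrix.trace_smul, Matrix.trace_smul,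
    smul_eq_mul, smul_eq_mul]
  ring

lemma trace_smul_mul (N : ℕ) (c : ℂ) (M P : Matrix (Fin N) (Fin N) ℂ) :
    Matrix.trace ((c • M) * P) = c * Matrix.trace (M * P) := by
  rw [Matrix.smul_mul, Matrix.trace_smul, smul_eq_mul]

lemma trace_mul_smul (N : ℕ) (c : ℂ) (M P : Matrix (Fin N) (Fin N) ℂ) :
    Matrix.trace (M * (c • P)) = c * Matrix.trace (M * P) := by
  rw [Matrix.mul_smul, Matrix.trace_smul, smul_eq_mul]

lemma traceFF (N : ℕ) (k l : Fin N × Fin N) :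
    Matrix.trace (hermBasis N k * hermBasis N l) = if k = l then 1 else 0 := by
  obtain ⟨k1, k2⟩ := k
  obtain ⟨l1, l2⟩ := l
  rcases lt_trichotomy k1 k2 with hk | hk | hk <;>
    rcases lt_trichotomy l1 l2 with hl | hl | hl
  · -- sym, sym
    rw [hermBasis_lt N (k := (k1,k2)) hk, hermBasis_lt N (k := (l1,l2)) hl,
      trace_smul_mul_smul, sqrt2_inv_mul]
    simp only [Matrix.add_mul, Matrix.mul_add, Matrix.trace_add, traceEE]
    simp only [Prod.mk.injEq, Fin.ext_iff, Fin.lt_def] at hk hl ⊢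
    split_ifs
    any_goals (exfalso; omega)
    all_goals norm_num
  · -- sym, diag
    subst hl
    rw [hermBasis_lt N (k := (k1,k2)) hk, hermBasis_diag N (k := (l1,l1)) rfl,
      trace_smul_mul]
    simp only [Matrix.add_mul, Matrix.trace_add, traceEE]
    simp only [Prod.mk.injEq, Fin.ext_iff, Fin.lt_def] at hk ⊢
    split_ifs
    any_goals (exfalso; omega)
    all_goals norm_num
  · -- sym, anti
    rw [hermBasis_lt N (k := (k1,k2)) hk, hermBasis_gt N (k := (l1,l2)) hl,
      trace_smul_mul_smul]
    simp only [Matrix.add_mul, Matrix.mul_sub, Matrix.sub_mul, Matrix.mul_add,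
      Matrix.trace_add, Matrix.trace_sub, traceEE]
    simp only [Prod.mk.injEq, Fin.ext_iff, Fin.lt_def] at hk hl ⊢
    split_ifs
    any_goals (exfalso; omega)
    all_goals norm_num
  · -- diag, sym
    subst hk
    rw [hermBasis_diag N (k := (k1,k1)) rfl, hermBasis_lt N (k := (l1,l2)) hl,
      trace_mul_smul]
    simp only [Matrix.mul_add, Matrix.trace_add, traceEE]
    simp only [Prod.mk.injEq, Fin.ext_iff, Fin.lt_def] at hl ⊢
    split_ifs
    any_goals (exfalso; omega)
    all_goals norm_num
  · -- diag, diag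
    subst hk; subst hl
    rw [hermBasis_diag N (k := (k1,k1)) rfl, hermBasis_diag N (k := (l1,l1)) rfl,
      traceEE]
    simp only [Prod.mk.injEq, Fin.ext_iff]
    split_ifs
    any_goals (exfalso; omega)
    all_goals norm_num
  · -- diag, anti
    subst hk
    rw [hermBasis_diag N (k := (k1,k1)) rfl, hermBasis_gt N (k := (l1,l2)) hl,
      trace_mul_smul]
    simp only [Matrix.mul_sub, Matrix.trace_sub, traceEE]
    simp only [Prod.mk.injEq, Fin.ext_iff, Fin.lt_def] at hl ⊢
    split_ifs
    any_goals (exfalso; omega)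
    all_goals norm_num
  · -- anti, sym
    rw [hermBasis_gt N (k := (k1,k2)) hk, hermBasis_lt N (k := (l1,l2)) hl,
      trace_smul_mul_smul]
    simp only [Matrix.sub_mul, Matrix.mul_add, Matrix.add_mul, Matrix.mul_sub,
      Matrix.trace_add, Matrix.trace_sub, traceEE]
    simp only [Prod.mk.injEq, Fin.ext_iff, Fin.lt_def] at hk hl ⊢
    split_ifs
    any_goals (exfalso; omega)
    all_goals norm_num
  · -- anti, diag
    subst hl
    rw [hermBasis_gt N (k := (k1,k2)) hk, hermBasis_diag N (k := (l1,l1)) rfl,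
      trace_smul_mul]
    simp only [Matrix.sub_mul, Matrix.trace_sub, traceEE]
    simp only [Prod.mk.injEq, Fin.ext_iff, Fin.lt_def] at hk ⊢
    split_ifs
    any_goals (exfalso; omega)
    all_goals norm_num
  · -- anti, anti
    rw [hermBasis_gt N (k := (k1,k2)) hk, hermBasis_gt N (k := (l1,l2)) hl,
      trace_smul_mul_smul]
    have hI : Complex.I * ((Real.sqrt 2:ℂ))⁻¹ * (Complex.I * ((Real.sqrt 2:ℂ))⁻¹) = -2⁻¹ := by
      have := sqrt2_inv_mul
      have hII := Complex.I_mul_I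
      calc Complex.I * ((Real.sqrt 2:ℂ))⁻¹ * (Complex.I * ((Real.sqrt 2:ℂ))⁻¹)
          = (Complex.I * Complex.I) * (((Real.sqrt 2:ℂ))⁻¹ * ((Real.sqrt 2:ℂ))⁻¹) := by ring
        _ = -2⁻¹ := by rw [hII, sqrt2_inv_mul]; ring
    rw [hI]
    simp only [Matrix.sub_mul, Matrix.mul_sub, Matrix.trace_sub, traceEE]
    simp only [Prod.mk.injEq, Fin.ext_iff, Fin.lt_def] at hk hl ⊢
    split_ifs
    any_goals (exfalso; omega)
    all_goals norm_num

lemma qExp_kron (N : ℕ) (M P : Matrix (Fin N) (Fin N) ℂ) :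
    qExp N (M ⊗ₖ P) = (N : ℂ)⁻¹ * Matrix.trace (M * Pᵀ) := by
  have hs : ((Real.sqrt N : ℂ))⁻¹ * ((Real.sqrt N : ℂ))⁻¹ = (N : ℂ)⁻¹ := by
    rw [← mul_inv, ← Complex.ofReal_mul, Real.mul_self_sqrt (Nat.cast_nonneg N)]
    push_cast; ring
  simp only [qExp, maxEnt, dotProduct, mulVec, Pi.star_apply,
    kroneckerMap_apply, Matrix.trace, Matrix.diag, Matrix.mul_apply, Matrix.transpose_apply]
  simp only [apply_ite (star : ℂ → ℂ), star_zero, Fintype.sum_prod_type, dotProduct]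
  simp only [mul_ite, mul_zero, ite_mul, zero_mul, Finset.sum_ite_eq, Finset.sum_ite_eq',
    Finset.mem_univ, if_true]
  simp only [star_inv₀, Complex.star_def, Complex.conj_ofReal]
  rw [← hs, Finset.mul_sum]
  refine Finset.sum_congr rfl fun x _ => ?_
  rw [← Finset.sum_mul]
  ring

/-- `C b := ∑ₖ bₖ Fₖ`, so that `Bop b = (C b)ᵀ`. -/
noncomputable def Cop (N : ℕ) (b : Fin N × Fin N → ℝ) : Matrix (Fin N) (Fin N) ℂ :=
  ∑ k, (b k : ℂ) • hermBasis N k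

lemma Bop_eq (N : ℕ) (b : Fin N × Fin N → ℝ) : Bop N b = (Cop N b)ᵀ := by
  rw [Bop, Cop, Matrix.transpose_sum]
  refine Finset.sum_congr rfl fun k _ => ?_
  rw [Matrix.transpose_smul]

lemma trace_CC (N : ℕ) (a b : Fin N × Fin N → ℝ) :
    Matrix.trace (Cop N a * Cop N b) = ((∑ k, a k * b k : ℝ) : ℂ) := by
  rw [Cop, Cop, Finset.sum_mul_sum, Matrix.trace_sum]
  have : ∀ k ∈ (Finset.univ : Finset (Fin N × Fin N)),
      Matrix.trace (∑ l, ((a k : ℂ) • hermBasis N k) * ((b l : ℂ) • hermBasis N l)) =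
      (a k : ℂ) * (b k : ℂ) := by
    intro k _
    rw [Matrix.trace_sum]
    have : ∀ l ∈ (Finset.univ : Finset (Fin N × Fin N)),
        Matrix.trace (((a k : ℂ) • hermBasis N k) * ((b l : ℂ) • hermBasis N l)) =
        if k = l then (a k : ℂ) * (b l : ℂ) else 0 := by
      intro l _
      rw [trace_smul_mul_smul, traceFF]
      split_ifs <;> ring
    rw [Finset.sum_congr rfl this, Finset.sum_ite_eq, if_pos (Finset.mem_univ k)]
  rw [Finset.sum_congr rfl this]
  push_cast
  rfl

lemma pearson_formula (N : ℕ) (hN : 1 ≤ N)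
    (a b : EuclideanSpace ℝ (Fin N × Fin N)) (ha : a ≠ 0) (hb : b ≠ 0) :
    pearson N a b = (((∑ k, a k * b k) / (‖a‖ * ‖b‖) : ℝ) : ℂ) := by
  have hNR : (0:ℝ) < (N:ℝ)⁻¹ := by
    have : (0:ℝ) < N := by exact_mod_cast hN
    positivity
  have hnorm : ∀ c : EuclideanSpace ℝ (Fin N × Fin N), (∑ k, c k * c k) = ‖c‖ ^ 2 := by
    intro c
    rw [EuclideanSpace.norm_eq, Real.sq_sqrt (by positivity)]
    refine Finset.sum_congr rfl fun k _ => ?_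
    rw [Real.norm_eq_abs, sq_abs]; ring
  have hA : Aop N a = Cop N a := rfl
  -- numerator
  have e1 : qExp N (Aop N a ⊗ₖ Bop N b) = (N : ℂ)⁻¹ * ((∑ k, a k * b k : ℝ) : ℂ) := by
    rw [qExp_kron, hA, Bop_eq, Matrix.transpose_transpose, trace_CC]
  -- first denominator factor
  have e2 : (qExp N ((Aop N a * Aop N a) ⊗ₖ 1)).re = (N : ℝ)⁻¹ * ‖a‖ ^ 2 := by
    rw [qExp_kron, Matrix.transpose_one, Matrix.mul_one, hA, trace_CC, hnorm]
    have : ((N : ℂ))⁻¹ * ((‖a‖ ^ 2 : ℝ) : ℂ) = (((N:ℝ)⁻¹ * ‖a‖ ^ 2 : ℝ) : ℂ) := by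
      push_cast; ring
    rw [this, Complex.ofReal_re]
  have e3 : (qExp N ((1 : Matrix (Fin N) (Fin N) ℂ) ⊗ₖ (Bop N b * Bop N b))).re
      = (N : ℝ)⁻¹ * ‖b‖ ^ 2 := by
    rw [qExp_kron, Matrix.one_mul, Bop_eq, ← Matrix.transpose_mul, Matrix.transpose_transpose,
      trace_CC, hnorm]
    have : ((N : ℂ))⁻¹ * ((‖b‖ ^ 2 : ℝ) : ℂ) = (((N:ℝ)⁻¹ * ‖b‖ ^ 2 : ℝ) : ℂ) := by
      push_cast; ring
    rw [this, Complex.ofReal_re]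
  have ha' : (0:ℝ) < ‖a‖ := norm_pos_iff.mpr ha
  have hb' : (0:ℝ) < ‖b‖ := norm_pos_iff.mpr hb
  have hsq : Real.sqrt ((N : ℝ)⁻¹ * ‖a‖ ^ 2 * ((N : ℝ)⁻¹ * ‖b‖ ^ 2)) =
      (N : ℝ)⁻¹ * (‖a‖ * ‖b‖) := by
    have : (N : ℝ)⁻¹ * ‖a‖ ^ 2 * ((N : ℝ)⁻¹ * ‖b‖ ^ 2) = ((N : ℝ)⁻¹ * (‖a‖ * ‖b‖)) ^ 2 := by
      ring
    rw [this, Real.sqrt_sq (by positivity)]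
  rw [pearson, e1, e2, e3, hsq]
  have : ((N : ℂ))⁻¹ * ((∑ k, a k * b k : ℝ) : ℂ) = (((N:ℝ)⁻¹ * ∑ k, a k * b k : ℝ) : ℂ) := by
    push_cast; ring
  rw [this, ← Complex.ofReal_div]
  congr 1
  rw [mul_comm ((N:ℝ)⁻¹) (‖a‖ * ‖b‖)]
  rw [div_eq_div_iff (by positivity) (by positivity)]
  ring

/-- If `⟨A(a)⟩_ψ = ⟨B(b)⟩_ψ = 0` on the maximally entangled state, the Pearson
correlation coefficient equals `(a/‖a‖)·(b/‖b‖)`; in particular it is `1` for `b = a`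
and `-1` for `b = -a`. -/
theorem pearson_eq_normalized_dot (N : ℕ) (hN : 1 ≤ N)
    (a b : EuclideanSpace ℝ (Fin N × Fin N)) (ha : a ≠ 0) (hb : b ≠ 0)
    (hA0 : qExp N (Aop N a ⊗ₖ (1 : Matrix (Fin N) (Fin N) ℂ)) = 0)
    (hB0 : qExp N ((1 : Matrix (Fin N) (Fin N) ℂ) ⊗ₖ Bop N b) = 0) :
    pearson N a b = (((∑ k, a k * b k) / (‖a‖ * ‖b‖) : ℝ) : ℂ)
    ∧ pearson N a a = 1 ∧ pearson N a (-a) = -1 := by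
  have hnorm : (∑ k, a k * a k) = ‖a‖ ^ 2 := by
    rw [EuclideanSpace.norm_eq, Real.sq_sqrt (by positivity)]
    refine Finset.sum_congr rfl fun k _ => ?_
    rw [Real.norm_eq_abs, sq_abs]; ring
  have ha' : (0:ℝ) < ‖a‖ := norm_pos_iff.mpr ha
  refine ⟨pearson_formula N hN a b ha hb, ?_, ?_⟩
  · rw [pearson_formula N hN a a ha ha, hnorm]
    rw [show ‖a‖ ^ 2 / (‖a‖ * ‖a‖) = 1 by rw [sq]; field_simp]
    norm_num
  · have hna : (-a : EuclideanSpace ℝ (Fin N × Fin N)) ≠ 0 := neg_ne_zero.mpr ha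
    rw [← WithLp.ofLp_neg, pearson_formula N hN a (-a) ha hna]
    have h1 : (∑ k, a k * (-a) k) = -‖a‖ ^ 2 := by
      rw [← hnorm, ← Finset.sum_neg_distrib]
      refine Finset.sum_congr rfl fun k _ => ?_
      have : (-a : EuclideanSpace ℝ (Fin N × Fin N)) k = -(a k) := rfl
      rw [this]; ring
    rw [h1, norm_neg]
    rw [show -‖a‖ ^ 2 / (‖a‖ * ‖a‖) = -1 by rw [sq]; field_simp]
    norm_num
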